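/- Under the setup of Theorem 2 (i.i.d. nonnegative ξᵢ with tail regularly varying of index −1; liminf xₙ/(nG(xₙ)) > 0; aₙ → a ∈ (0,∞)): let i* be a uniformly chosen index attaining Mₙ and S_{n,k} the sum of any k of the remaining n−1 variables (chosen independently of their values). Then for every ε > 0, max_{1≤k≤n−1} P(|S_{n,k} − kG(xₙ)| ≥ εxₙ | Mₙ ≥ aₙxₙ) → 0 as n → ∞. -/

import Mathlib

open Filter MeasureTheory ProbabilityTheory


lemma aux_geom_lb {p : ℝ} (hp0 : 0 ≤ p) (hp1 : p ≤ 1) (n : ℕ) (hnp : (n:ℝ)*p ≤ 1) :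
    (n:ℝ) * p / 2 ≤ 1 - (1-p)^n := by
  have hgeom := geom_sum_mul (1 - p) n
  have h1 : 1 - (1-p)^n = p * ∑ i ∈ Finset.range n, (1-p)^i := by nlinarith [hgeom]
  have h2 : ∀ i ∈ Finset.range n, (1:ℝ) - (i:ℝ)*p ≤ (1-p)^i := by
    intro i _
    have := one_add_mul_le_pow (a := -p) (by linarith) i
    calc (1:ℝ) - (i:ℝ)*p = 1 + (i:ℝ)*(-p) := by ring
    _ ≤ (1 + -p)^i := this
    _ = (1-p)^i := by ring_nf
  have hgauss : (∑ i ∈ Finset.range n, (i:ℝ)) * 2 ≤ (n:ℝ) * (n:ℝ) := by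
    have hn : ((∑ i ∈ Finset.range n, i) * 2 : ℕ) = n * (n-1) := Finset.sum_range_id_mul_two n
    have hle : ((∑ i ∈ Finset.range n, i) * 2 : ℕ) ≤ n * n := by
      rw [hn]; exact Nat.mul_le_mul_left n (Nat.sub_le n 1)
    calc (∑ i ∈ Finset.range n, (i:ℝ)) * 2 = (((∑ i ∈ Finset.range n, i) * 2 : ℕ) : ℝ) := by
          push_cast; ring
    _ ≤ ((n * n : ℕ) : ℝ) := by exact_mod_cast hle
    _ = (n:ℝ) * n := by push_cast; ring
  have h3 : (n:ℝ) - p * ((n:ℝ)*(n:ℝ)/2) ≤ ∑ i ∈ Finset.range n, (1-p)^i := by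
    have hsum : ∑ i ∈ Finset.range n, ((1:ℝ) - (i:ℝ)*p) ≤ ∑ i ∈ Finset.range n, (1-p)^i :=
      Finset.sum_le_sum h2
    have heq : ∑ i ∈ Finset.range n, ((1:ℝ) - (i:ℝ)*p) = (n:ℝ) - (∑ i ∈ Finset.range n, (i:ℝ)) * p := by
      rw [Finset.sum_sub_distrib]
      simp only [Finset.sum_const, Finset.card_range, nsmul_eq_mul, mul_one]
      rw [← Finset.sum_mul]
    nlinarith [hsum, heq, hp0, hgauss]
  have hS : (n:ℝ)/2 ≤ ∑ i ∈ Finset.range n, (1-p)^i := by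
    nlinarith [h3, hnp, hp0, Nat.cast_nonneg (α := ℝ) n]
  calc (n:ℝ)*p/2 = p * ((n:ℝ)/2) := by ring
  _ ≤ p * ∑ i ∈ Finset.range n, (1-p)^i := mul_le_mul_of_nonneg_left hS hp0
  _ = 1 - (1-p)^n := h1.symm

lemma aux_intOn {F : ℝ → ℝ} (hmono : Antitone F) (h0 : ∀ t, 0 ≤ F t) (h1 : ∀ t, F t ≤ 1)
    (a b : ℝ) : IntegrableOn F (Set.Ioc a b) := by
  refine Integrable.mono' (integrable_const 1) (hmono.measurable.aestronglyMeasurable) ?_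
  filter_upwards with t
  rw [Real.norm_eq_abs, abs_of_nonneg (h0 t)]
  exact h1 t

lemma aux_G_split {F : ℝ → ℝ} (hmono : Antitone F) (h0 : ∀ t, 0 ≤ F t) (h1 : ∀ t, F t ≤ 1)
    {a b : ℝ} (h0a : 0 ≤ a) (hab : a ≤ b) :
    ∫ t in Set.Ioc 0 b, F t = (∫ t in Set.Ioc 0 a, F t) + ∫ t in Set.Ioc a b, F t := by
  rw [← setIntegral_union (Set.Ioc_disjoint_Ioc_of_le le_rfl) measurableSet_Ioc
      (aux_intOn hmono h0 h1 0 a) (aux_intOn hmono h0 h1 a b),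
    Set.Ioc_union_Ioc_eq_Ioc h0a hab]

lemma aux_int_ub {F : ℝ → ℝ} (hmono : Antitone F) (h0 : ∀ t, 0 ≤ F t) (h1 : ∀ t, F t ≤ 1)
    {a b : ℝ} (hab : a ≤ b) : ∫ t in Set.Ioc a b, F t ≤ (b - a) * F a := by
  calc ∫ t in Set.Ioc a b, F t ≤ ∫ _t in Set.Ioc a b, F a := by
        apply setIntegral_mono_on (aux_intOn hmono h0 h1 a b)
          (integrableOn_const measure_Ioc_lt_top.ne) measurableSet_Ioc
        intro t ht
        exact hmono ht.1.le
  _ = (b - a) * F a := by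
        rw [setIntegral_const, Real.volume_real_Ioc_of_le hab, smul_eq_mul]

lemma aux_int_lb {F : ℝ → ℝ} (hmono : Antitone F) (h0 : ∀ t, 0 ≤ F t) (h1 : ∀ t, F t ≤ 1)
    {a b : ℝ} (hab : a ≤ b) : (b - a) * F b ≤ ∫ t in Set.Ioc a b, F t := by
  calc (b - a) * F b = ∫ _t in Set.Ioc a b, F b := by
        rw [setIntegral_const, Real.volume_real_Ioc_of_le hab, smul_eq_mul]
  _ ≤ ∫ t in Set.Ioc a b, F t := by
        apply setIntegral_mono_on (integrableOn_const measure_Ioc_lt_top.ne)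
          (aux_intOn hmono h0 h1 a b) measurableSet_Ioc
        intro t ht
        exact hmono ht.2

lemma aux_G_nonneg {F : ℝ → ℝ} (h0 : ∀ t, 0 ≤ F t) (b : ℝ) :
    0 ≤ ∫ t in Set.Ioc 0 b, F t :=
  setIntegral_nonneg measurableSet_Ioc (fun t _ => h0 t)

set_option maxHeartbeats 2000000 in
lemma aux_Emin {Ω : Type*} [MeasurableSpace Ω] (μ : Measure Ω) [IsProbabilityMeasure μ]
    (ξ0 : Ω → ℝ) (hmeas : Measurable ξ0) (hnn : ∀ ω, 0 ≤ ξ0 ω)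
    (Fbar : ℝ → ℝ) (hFbar : ∀ x, Fbar x = (μ {ω | x ≤ ξ0 ω}).toReal)
    {b : ℝ} (hb : 0 < b) :
    ∫ ω, min (ξ0 ω) b ∂μ = ∫ t in Set.Ioc 0 b, Fbar t := by
  have hmeas' : Measurable (fun ω => min (ξ0 ω) b) := hmeas.min measurable_const
  have hint : Integrable (fun ω => min (ξ0 ω) b) μ := by
    refine Integrable.mono' (integrable_const b) hmeas'.aestronglyMeasurable ?_
    filter_upwards with ω
    rw [Real.norm_eq_abs, abs_of_nonneg (le_min (hnn ω) hb.le)]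
    exact min_le_right _ _
  have hnn' : 0 ≤ᵐ[μ] (fun ω => min (ξ0 ω) b) :=
    Filter.Eventually.of_forall (fun ω => le_min (hnn ω) hb.le)
  have hbdd : (fun ω => min (ξ0 ω) b) ≤ᵐ[μ] (fun _ => b) :=
    Filter.Eventually.of_forall (fun ω => min_le_right _ _)
  rw [hint.integral_eq_integral_Ioc_meas_le hnn' hbdd]
  refine setIntegral_congr_fun measurableSet_Ioc (fun t ht => ?_)
  have hset : {a | t ≤ min (ξ0 a) b} = {ω | t ≤ ξ0 ω} := by
    ext ω
    simp only [Set.mem_setOf_eq, le_min_iff, and_iff_left_iff_imp]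
    exact fun _ => ht.2
  rw [hset, hFbar]; rfl

set_option maxHeartbeats 2000000 in
lemma aux_prob {Ω : Type*} [MeasurableSpace Ω] (μ : Measure Ω) [IsProbabilityMeasure μ]
    (ξ : ℕ → Ω → ℝ) (hmeas : ∀ i, Measurable (ξ i))
    (hindep : iIndepFun ξ μ)
    (hident : ∀ i, IdentDistrib (ξ i) (ξ 0) μ μ)
    (hξ0 : ∀ i ω, 0 ≤ ξ i ω)
    (Fbar G : ℝ → ℝ)
    (hFbar : ∀ x, Fbar x = (μ {ω | x ≤ ξ 0 ω}).toReal)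
    (hFanti : Antitone Fbar)
    {X b aX ε δ : ℝ}
    (hX : 0 < X) (hb : 0 < b) (hbX : b ≤ X) (hε : 0 < ε) (hδ : 0 < δ)
    (hEmin : ∫ ω, min (ξ 0 ω) b ∂μ = G b)
    {n k : ℕ} (hn2 : 2 ≤ n) (hk : k ≤ n)
    (iS : Ω → ℕ) (hiS : ∀ ω, iS ω < n ∧ ∀ j < n, ξ j ω ≤ ξ (iS ω) ω)
    (Kk : ℕ → Finset ℕ)
    (hKk : ∀ i < n, Kk i ⊆ (Finset.range n).erase i ∧ (Kk i).card = k)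
    (hGb0 : 0 ≤ G b) (hGmono : G b ≤ G X)
    (hshift : (n:ℝ) * (G X - G b) ≤ ε * X / 2)
    (hρ1 : (n:ℝ) * Fbar b ≤ δ/4)
    (hρ2 : (n:ℝ) * (b * G b) / (ε*X/2)^2 ≤ δ/4)
    (hnp : (n:ℝ) * Fbar aX ≤ 1)
    (hppos : 0 < Fbar aX) :
    (μ {ω | ε * X ≤ |(∑ j ∈ Kk (iS ω), ξ j ω) - (k:ℝ) * G X| ∧ ∃ i < n, aX ≤ ξ i ω}).toReal
      / (μ {ω | ∃ i < n, aX ≤ ξ i ω}).toReal ≤ δ := by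
  classical
  set p : ℝ := Fbar aX with hp
  set pb : ℝ := Fbar b with hpbdef
  have hp0 : 0 ≤ p := hppos.le
  have hp1 : p ≤ 1 := by
    rw [hp, hFbar]
    exact ENNReal.toReal_le_of_le_ofReal one_pos.le (by simpa using prob_le_one (μ := μ) (s := {ω | aX ≤ ξ 0 ω}))
  have hpb0 : 0 ≤ pb := by
    rw [hpbdef, hFbar]; exact ENNReal.toReal_nonneg
  -- truncated variables
  set Y : ℕ → Ω → ℝ := fun j ω => min (ξ j ω) b with hYdef'
  have hYdef : ∀ j ω, Y j ω = min (ξ j ω) b := fun _ _ => rfl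
  have hYmeas : ∀ j, Measurable (Y j) := fun j => (hmeas j).min measurable_const
  have hYindep : iIndepFun Y μ :=
    hindep.comp (fun _ r => min r b) (fun _ => measurable_id.min measurable_const)
  have hYident : ∀ j, IdentDistrib (Y j) (Y 0) μ μ :=
    fun j => (hident j).comp (measurable_id.min measurable_const)
  have hYbdd : ∀ j ω, 0 ≤ Y j ω ∧ Y j ω ≤ b :=
    fun j ω => ⟨le_min (hξ0 j ω) hb.le, min_le_right _ _⟩
  have hYmem : ∀ j, MemLp (Y j) 2 μ := by
    intro j
    refine MemLp.of_bound (hYmeas j).aestronglyMeasurable b ?_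
    filter_upwards with ω
    rw [Real.norm_eq_abs, abs_of_nonneg (hYbdd j ω).1]
    exact (hYbdd j ω).2
  have hEY : ∀ j, ∫ ω, Y j ω ∂μ = G b := fun j => ((hYident j).integral_eq).trans hEmin
  have hVarY0 : variance (Y 0) μ ≤ b * G b := by
    have h1 : variance (Y 0) μ ≤ μ[(Y 0) ^ 2] :=
      variance_le_expectation_sq (hYmeas 0).aestronglyMeasurable
    have h2 : μ[(Y 0) ^ 2] ≤ ∫ ω, b * Y 0 ω ∂μ := by
      apply integral_mono (hYmem 0).integrable_sq (((hYmem 0).integrable one_le_two).const_mul b)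
      intro ω
      have h3 := hYbdd 0 ω
      simp only [Pi.pow_apply]
      nlinarith [h3.1, h3.2]
    calc variance (Y 0) μ ≤ μ[(Y 0)^2] := h1
    _ ≤ ∫ ω, b * Y 0 ω ∂μ := h2
    _ = b * G b := by rw [integral_const_mul, hEY]
  have hbGb0 : 0 ≤ b * G b := mul_nonneg hb.le hGb0
  -- events
  have hAi : ∀ i, μ (ξ i ⁻¹' Set.Ici aX) = ENNReal.ofReal p := by
    intro i
    have h1 : μ (ξ i ⁻¹' Set.Ici aX) = μ (ξ 0 ⁻¹' Set.Ici aX) :=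
      (hident i).measure_mem_eq measurableSet_Ici
    have h2 : {ω | aX ≤ ξ 0 ω} = ξ 0 ⁻¹' Set.Ici aX := rfl
    rw [h1, hp, hFbar, h2, ENNReal.ofReal_toReal (measure_ne_top μ _)]
  have hpbval : μ (ξ 0 ⁻¹' Set.Ici b) = ENNReal.ofReal pb := by
    have h2 : {ω | b ≤ ξ 0 ω} = ξ 0 ⁻¹' Set.Ici b := rfl
    rw [hpbdef, hFbar, h2, ENNReal.ofReal_toReal (measure_ne_top μ _)]
  -- the per-i bad-sum event bound
  have hBi : ∀ i, i < n → μ ((∑ j ∈ Kk i, ξ j) ⁻¹' {y | ε * X ≤ |y - (k:ℝ) * G X|})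
      ≤ ENNReal.ofReal (δ/2) := by
    intro i hi
    obtain ⟨hKsub, hcard⟩ := hKk i hi
    set S := Kk i with hS
    set W : Ω → ℝ := ∑ j ∈ S, Y j with hW
    have hWmem : MemLp W 2 μ := memLp_finsetSum' S (fun j _ => hYmem j)
    have hEW : μ[W] = (k:ℝ) * G b := by
      have h0 : μ[W] = ∫ ω, ∑ j ∈ S, Y j ω ∂μ := by
        apply integral_congr_ae; filter_upwards with ω; simp [hW]
      rw [h0, integral_finset_sum S (fun j _ => (hYmem j).integrable one_le_two)]
      simp only [hEY, Finset.sum_const, hcard, nsmul_eq_mul]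
    have hVarW : variance W μ ≤ (n:ℝ) * (b * G b) := by
      have h1 : variance W μ = ∑ j ∈ S, variance (Y j) μ :=
        IndepFun.variance_sum (fun j _ => hYmem j)
          (fun j _ j' _ hne => hYindep.indepFun hne)
      rw [h1]
      calc ∑ j ∈ S, variance (Y j) μ ≤ ∑ _j ∈ S, (b * G b) := by
            refine Finset.sum_le_sum (fun j _ => ?_)
            rw [(hYident j).variance_eq]; exact hVarY0
      _ = (k:ℝ) * (b * G b) := by rw [Finset.sum_const, hcard, nsmul_eq_mul]
      _ ≤ (n:ℝ) * (b * G b) := by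
            apply mul_le_mul_of_nonneg_right _ hbGb0
            exact_mod_cast hk
    have hc : (0:ℝ) < ε * X / 2 := by positivity
    have hcheb : μ {ω | ε * X / 2 ≤ |W ω - (k:ℝ) * G b|} ≤ ENNReal.ofReal (δ/4) := by
      have h := meas_ge_le_variance_div_sq (μ := μ) hWmem hc
      rw [hEW] at h
      refine h.trans (ENNReal.ofReal_le_ofReal ?_)
      calc variance W μ / (ε*X/2)^2 ≤ (n:ℝ) * (b * G b) / (ε*X/2)^2 :=
            div_le_div_of_nonneg_right hVarW (by positivity)
      _ ≤ δ/4 := hρ2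
    have hT : μ (⋃ j ∈ S, ξ j ⁻¹' Set.Ici b) ≤ ENNReal.ofReal (δ/4) := by
      calc μ (⋃ j ∈ S, ξ j ⁻¹' Set.Ici b) ≤ ∑ j ∈ S, μ (ξ j ⁻¹' Set.Ici b) :=
            measure_biUnion_finset_le S _
      _ = ∑ _j ∈ S, ENNReal.ofReal pb := by
          refine Finset.sum_congr rfl (fun j _ => ?_)
          rw [(hident j).measure_mem_eq measurableSet_Ici, hpbval]
      _ = (k : ENNReal) * ENNReal.ofReal pb := by rw [Finset.sum_const, hcard, nsmul_eq_mul]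
      _ = ENNReal.ofReal ((k:ℝ) * pb) := by
          rw [ENNReal.ofReal_mul (Nat.cast_nonneg k), ENNReal.ofReal_natCast]
      _ ≤ ENNReal.ofReal (δ/4) := by
          apply ENNReal.ofReal_le_ofReal
          refine le_trans ?_ hρ1
          apply mul_le_mul_of_nonneg_right _ hpb0
          exact_mod_cast hk
    have hkn : (k:ℝ) ≤ (n:ℝ) := by exact_mod_cast hk
    have hsub : (∑ j ∈ S, ξ j) ⁻¹' {y | ε * X ≤ |y - (k:ℝ) * G X|} ⊆
        (⋃ j ∈ S, ξ j ⁻¹' Set.Ici b) ∪ {ω | ε * X / 2 ≤ |W ω - (k:ℝ) * G b|} := by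
      intro ω hω
      simp only [Set.mem_preimage, Set.mem_setOf_eq, Finset.sum_apply] at hω
      by_contra hcon
      rw [Set.mem_union, not_or] at hcon
      obtain ⟨h1, h2⟩ := hcon
      have hlt : ∀ j ∈ S, ξ j ω < b := by
        intro j hj
        by_contra hge
        exact h1 (Set.mem_biUnion hj (show ω ∈ ξ j ⁻¹' Set.Ici b from not_lt.1 hge))
      have hWeq : W ω = ∑ j ∈ S, ξ j ω := by
        simp only [hW, Finset.sum_apply]
        exact Finset.sum_congr rfl (fun j hj => by rw [hYdef]; exact min_eq_left (hlt j hj).le)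
      have h2' : |W ω - (k:ℝ)*G b| < ε*X/2 := by
        by_contra hge
        exact h2 (show ε * X / 2 ≤ |W ω - (k:ℝ) * G b| from not_lt.1 hge)
      have habs : |(∑ j ∈ S, ξ j ω) - (k:ℝ) * G X| ≤ |W ω - (k:ℝ)*G b| + (k:ℝ)*(G X - G b) := by
        have h3 : (∑ j ∈ S, ξ j ω) - (k:ℝ) * G X
            = (W ω - (k:ℝ)*G b) + ((k:ℝ)*G b - (k:ℝ)*G X) := by rw [hWeq]; ring
        rw [h3]
        refine (abs_add_le _ _).trans ?_
        have h4 : |(k:ℝ)*G b - (k:ℝ)*G X| = (k:ℝ)*(G X - G b) := by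
          rw [abs_of_nonpos (by nlinarith [Nat.cast_nonneg (α := ℝ) k])]; ring
        rw [h4]
      have h5 : (k:ℝ)*(G X - G b) ≤ ε * X / 2 := by nlinarith [Nat.cast_nonneg (α := ℝ) k]
      linarith
    calc μ ((∑ j ∈ S, ξ j) ⁻¹' {y | ε * X ≤ |y - (k:ℝ) * G X|})
        ≤ μ ((⋃ j ∈ S, ξ j ⁻¹' Set.Ici b) ∪ {ω | ε * X / 2 ≤ |W ω - (k:ℝ) * G b|}) :=
          measure_mono hsub
    _ ≤ μ (⋃ j ∈ S, ξ j ⁻¹' Set.Ici b) + μ {ω | ε * X / 2 ≤ |W ω - (k:ℝ) * G b|} :=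
          measure_union_le _ _
    _ ≤ ENNReal.ofReal (δ/4) + ENNReal.ofReal (δ/4) := add_le_add hT hcheb
    _ = ENNReal.ofReal (δ/2) := by
          rw [← ENNReal.ofReal_add (by positivity) (by positivity)]
          congr 1
          ring
  -- numerator bound
  have hnum : (μ {ω | ε * X ≤ |(∑ j ∈ Kk (iS ω), ξ j ω) - (k:ℝ) * G X|
      ∧ ∃ i < n, aX ≤ ξ i ω}).toReal ≤ (n:ℝ) * (δ/2 * p) := by
    set Dset : Set ℝ := {y | ε * X ≤ |y - (k:ℝ) * G X|} with hD
    have hDmeas : MeasurableSet Dset := by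
      have : Dset = (fun y => |y - (k:ℝ)*G X|) ⁻¹' Set.Ici (ε * X) := rfl
      rw [this]
      exact ((measurable_id.sub_const _).abs) measurableSet_Ici
    have hKnotmem : ∀ i, i < n → i ∉ Kk i := by
      intro i hi hmem
      exact Finset.notMem_erase i _ ((hKk i hi).1 hmem)
    have hNsub : {ω | ε * X ≤ |(∑ j ∈ Kk (iS ω), ξ j ω) - (k:ℝ) * G X| ∧ ∃ i < n, aX ≤ ξ i ω}
        ⊆ ⋃ i ∈ Finset.range n, ((∑ j ∈ Kk i, ξ j) ⁻¹' Dset ∩ ξ i ⁻¹' Set.Ici aX) := by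
      rintro ω ⟨h1, i0, hi0n, hi0⟩
      refine Set.mem_biUnion (Finset.mem_range.2 (hiS ω).1) ?_
      constructor
      · simp only [Set.mem_preimage, hD, Set.mem_setOf_eq, Finset.sum_apply]
        exact h1
      · exact le_trans hi0 ((hiS ω).2 i0 hi0n)
    have hterm : ∀ i ∈ Finset.range n,
        μ ((∑ j ∈ Kk i, ξ j) ⁻¹' Dset ∩ ξ i ⁻¹' Set.Ici aX) ≤ ENNReal.ofReal (δ/2 * p) := by
      intro i hi
      have hind : IndepFun (∑ j ∈ Kk i, ξ j) (ξ i) μ :=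
        hindep.indepFun_finsetSum_of_notMem hmeas (hKnotmem i (Finset.mem_range.1 hi))
      rw [hind.measure_inter_preimage_eq_mul _ _ hDmeas measurableSet_Ici, hAi i]
      calc μ ((∑ j ∈ Kk i, ξ j) ⁻¹' Dset) * ENNReal.ofReal p
          ≤ ENNReal.ofReal (δ/2) * ENNReal.ofReal p :=
            mul_le_mul_left (hBi i (Finset.mem_range.1 hi)) _
      _ = ENNReal.ofReal (δ/2 * p) := (ENNReal.ofReal_mul (by positivity)).symm
    have hN : μ {ω | ε * X ≤ |(∑ j ∈ Kk (iS ω), ξ j ω) - (k:ℝ) * G X| ∧ ∃ i < n, aX ≤ ξ i ω}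
        ≤ ENNReal.ofReal ((n:ℝ) * (δ/2 * p)) := by
      calc μ {ω | ε * X ≤ |(∑ j ∈ Kk (iS ω), ξ j ω) - (k:ℝ) * G X| ∧ ∃ i < n, aX ≤ ξ i ω}
          ≤ μ (⋃ i ∈ Finset.range n, ((∑ j ∈ Kk i, ξ j) ⁻¹' Dset ∩ ξ i ⁻¹' Set.Ici aX)) :=
            measure_mono hNsub
      _ ≤ ∑ i ∈ Finset.range n, μ ((∑ j ∈ Kk i, ξ j) ⁻¹' Dset ∩ ξ i ⁻¹' Set.Ici aX) :=
            measure_biUnion_finset_le _ _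
      _ ≤ ∑ _i ∈ Finset.range n, ENNReal.ofReal (δ/2 * p) := Finset.sum_le_sum hterm
      _ = (n : ENNReal) * ENNReal.ofReal (δ/2 * p) := by
            rw [Finset.sum_const, Finset.card_range, nsmul_eq_mul]
      _ = ENNReal.ofReal ((n:ℝ) * (δ/2 * p)) := by
            rw [ENNReal.ofReal_mul (Nat.cast_nonneg n), ENNReal.ofReal_natCast]
    exact ENNReal.toReal_le_of_le_ofReal (by positivity) hN
  -- denominator
  have hden : (μ {ω | ∃ i < n, aX ≤ ξ i ω}).toReal = 1 - (1-p)^n := by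
    have hU : {ω | ∃ i < n, aX ≤ ξ i ω} = ⋃ i ∈ Finset.range n, ξ i ⁻¹' Set.Ici aX := by
      ext ω; simp [Finset.mem_range, Set.mem_Ici]
    have hUm : MeasurableSet {ω | ∃ i < n, aX ≤ ξ i ω} := by
      rw [hU]
      exact Finset.measurableSet_biUnion _ (fun i _ => (hmeas i) measurableSet_Ici)
    have hUc : {ω | ∃ i < n, aX ≤ ξ i ω}ᶜ = ⋂ i ∈ Finset.range n, ξ i ⁻¹' Set.Iio aX := by
      ext ω
      simp only [hU, Set.compl_iUnion, Set.mem_iInter, Set.mem_compl_iff, Set.mem_preimage,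
        Set.mem_Ici, Set.mem_Iio, not_le]
    have hq : ∀ i, μ (ξ i ⁻¹' Set.Iio aX) = μ (ξ 0 ⁻¹' Set.Iio aX) :=
      fun i => (hident i).measure_mem_eq measurableSet_Iio
    have hprod : μ ({ω | ∃ i < n, aX ≤ ξ i ω}ᶜ) = (μ (ξ 0 ⁻¹' Set.Iio aX))^n := by
      rw [hUc, hindep.measure_inter_preimage_eq_mul (Finset.range n)
        (sets := fun _ => Set.Iio aX) (fun i _ => measurableSet_Iio)]
      simp [hq, Finset.prod_const]
    have hqval : (μ (ξ 0 ⁻¹' Set.Iio aX)).toReal = 1 - p := by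
      have h1 : (ξ 0 ⁻¹' Set.Iio aX) = (ξ 0 ⁻¹' Set.Ici aX)ᶜ := by
        ext ω; simp [not_le]
      rw [h1, prob_compl_eq_one_sub ((hmeas 0) measurableSet_Ici)]
      rw [ENNReal.toReal_sub_of_le prob_le_one ENNReal.one_ne_top]
      have h2 : {ω | aX ≤ ξ 0 ω} = ξ 0 ⁻¹' Set.Ici aX := rfl
      rw [hp, hFbar, h2]
      simp
    have hcompl : (μ ({ω | ∃ i < n, aX ≤ ξ i ω}ᶜ)).toReal
        = 1 - (μ {ω | ∃ i < n, aX ≤ ξ i ω}).toReal := by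
      rw [prob_compl_eq_one_sub hUm,
        ENNReal.toReal_sub_of_le prob_le_one ENNReal.one_ne_top, ENNReal.toReal_one]
    have hfin : (μ ({ω | ∃ i < n, aX ≤ ξ i ω}ᶜ)).toReal = (1-p)^n := by
      rw [hprod, ENNReal.toReal_pow, hqval]
    rw [hfin] at hcompl
    linarith
  have hdenge : (n:ℝ) * p / 2 ≤ (μ {ω | ∃ i < n, aX ≤ ξ i ω}).toReal := by
    rw [hden]; exact aux_geom_lb hp0 hp1 n hnp
  have hdenpos : 0 < (μ {ω | ∃ i < n, aX ≤ ξ i ω}).toReal := by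
    refine lt_of_lt_of_le ?_ hdenge
    have hn0 : (0:ℝ) < (n:ℝ) := by
      have : (0:ℕ) < n := by omega
      exact_mod_cast this
    positivity
  rw [div_le_iff₀ hdenpos]
  calc (μ {ω | ε * X ≤ |(∑ j ∈ Kk (iS ω), ξ j ω) - (k:ℝ) * G X| ∧ ∃ i < n, aX ≤ ξ i ω}).toReal
      ≤ (n:ℝ) * (δ/2 * p) := hnum
  _ = δ * ((n:ℝ) * p / 2) := by ring
  _ ≤ δ * (μ {ω | ∃ i < n, aX ≤ ξ i ω}).toReal := mul_le_mul_of_nonneg_left hdenge hδ.le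

set_option maxHeartbeats 2000000 in
theorem stmt16 {Ω : Type*} [MeasurableSpace Ω] (μ : Measure Ω) [IsProbabilityMeasure μ]
    (ξ : ℕ → Ω → ℝ) (hmeas : ∀ i, Measurable (ξ i))
    (hindep : iIndepFun ξ μ)
    (hident : ∀ i, IdentDistrib (ξ i) (ξ 0) μ μ)
    (hξ0 : ∀ i ω, 0 ≤ ξ i ω)
    (ℓ Fbar G : ℝ → ℝ)
    (hFbar : ∀ x, Fbar x = (μ {ω | x ≤ ξ 0 ω}).toReal)
    (htail : ∀ x > (0:ℝ), Fbar x = ℓ x / x)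
    (hslow : ∀ l > (0:ℝ), Tendsto (fun x => ℓ (l * x) / ℓ x) atTop (nhds 1))
    (hG : ∀ x, G x = ∫ t in Set.Ioc 0 x, Fbar t)
    (x a : ℕ → ℝ) (hx : ∀ n, 0 < x n) (hapos : ∀ n, 0 < a n)
    (hliminf : ∃ c > (0:ℝ), ∀ᶠ (n : ℕ) in atTop, c ≤ x n / ((n : ℝ) * G (x n)))
    (A : ℝ) (hA : 0 < A) (ha : Tendsto a atTop (nhds A))
    (iStar : ℕ → Ω → ℕ) (hiStarMeas : ∀ n, Measurable (iStar n))
    (hiStar : ∀ n ω, 0 < n → iStar n ω < n ∧ ∀ j < n, ξ j ω ≤ ξ (iStar n ω) ω)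
    (K : ℕ → ℕ → ℕ → Finset ℕ)
    (hK : ∀ n k i, i < n → 1 ≤ k → k ≤ n - 1 →
      K n k i ⊆ (Finset.range n).erase i ∧ (K n k i).card = k) :
    ∀ ε > (0:ℝ), ∀ δ > (0:ℝ), ∀ᶠ (n : ℕ) in atTop, ∀ k, 1 ≤ k → k ≤ n - 1 →
      (μ {ω | ε * x n ≤ |(∑ j ∈ K n k (iStar n ω), ξ j ω) - (k : ℝ) * G (x n)|
            ∧ ∃ i < n, a n * x n ≤ ξ i ω}).toReal
        / (μ {ω | ∃ i < n, a n * x n ≤ ξ i ω}).toReal ≤ δ := by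
  intro ε hε δ hδ
  obtain ⟨c, hc, hlim⟩ := hliminf
  -- basic facts about Fbar
  have hFanti : Antitone Fbar := by
    intro u v huv
    rw [hFbar, hFbar]
    exact ENNReal.toReal_mono (measure_ne_top μ _)
      (measure_mono (fun ω hω => le_trans huv hω))
  have hF0 : ∀ t, 0 ≤ Fbar t := fun t => by rw [hFbar]; exact ENNReal.toReal_nonneg
  have hF1 : ∀ t, Fbar t ≤ 1 := fun t => by
    rw [hFbar]
    exact ENNReal.toReal_le_of_le_ofReal one_pos.le
      (by simpa using prob_le_one (μ := μ) (s := {ω | t ≤ ξ 0 ω}))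
  -- ℓ in terms of Fbar
  have hl : ∀ y, 0 < y → ℓ y = y * Fbar y := by
    intro y hy
    rw [htail y hy, mul_div_cancel₀ _ (ne_of_gt hy)]
  -- eventual positivity of ℓ
  have hlev : ∀ᶠ y in atTop, ℓ y ≠ 0 := by
    have h := (hslow 1 one_pos).eventually (eventually_gt_nhds one_pos)
    filter_upwards [h] with y hy hy0
    rw [one_mul, hy0] at hy
    simp at hy
  have hFpos : ∀ t, 0 < Fbar t := by
    intro t
    obtain ⟨y0, hy1, hy2⟩ := (hlev.and (eventually_ge_atTop (max t 1))).exists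
    have hy0pos : 0 < y0 := lt_of_lt_of_le one_pos (le_trans (le_max_right t 1) hy2)
    have : Fbar y0 ≠ 0 := by
      intro h0
      rw [hl y0 hy0pos, h0, mul_zero] at hy1
      exact hy1 rfl
    have hFy0 : 0 < Fbar y0 := lt_of_le_of_ne (hF0 y0) (Ne.symm this)
    exact lt_of_lt_of_le hFy0 (hFanti (le_trans (le_max_left t 1) hy2))
  -- facts about G
  have hGdle : ∀ u v : ℝ, 0 ≤ u → u ≤ v → G v - G u ≤ (v - u) * Fbar u := by
    intro u v hu huv
    rw [hG, hG, aux_G_split hFanti hF0 hF1 hu huv]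
    have := aux_int_ub hFanti hF0 hF1 huv
    linarith
  have hGdge : ∀ u v : ℝ, 0 ≤ u → u ≤ v → (v - u) * Fbar v ≤ G v - G u := by
    intro u v hu huv
    rw [hG, hG, aux_G_split hFanti hF0 hF1 hu huv]
    have := aux_int_lb hFanti hF0 hF1 huv
    linarith
  have hG0 : ∀ v, 0 ≤ G v := fun v => by rw [hG]; exact aux_G_nonneg hF0 v
  have hGmono : ∀ u v : ℝ, 0 ≤ u → u ≤ v → G u ≤ G v := by
    intro u v hu huv
    have h1 := hGdge u v hu huv
    nlinarith [hF0 v]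
  have hGpos : ∀ v : ℝ, 0 < v → 0 < G v := by
    intro v hv
    have h1 := hGdge (v/2) v (by linarith) (by linarith)
    have h2 := hG0 (v/2)
    nlinarith [hFpos v]
  -- Karamata-type: y Fbar y = o(G y)
  have hL : ∀ κ : ℝ, 0 < κ → ∀ᶠ y in atTop, y * Fbar y ≤ κ * G y := by
    intro κ hκ
    obtain ⟨M, hM⟩ := exists_nat_ge (4/κ)
    have hblocks : ∀ j : ℕ, ∀ᶠ y in atTop, ℓ y / 2 ≤ ℓ ((1/2)^j * y) := by
      intro j
      have h := (hslow ((1/2)^j) (by positivity)).eventually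
        (eventually_gt_nhds (show (1:ℝ)/2 < 1 by norm_num))
      filter_upwards [h, hlev, eventually_gt_atTop 0] with y h1 h2 h3
      have hly : 0 < ℓ y := by
        rw [hl y h3]
        exact mul_pos h3 (hFpos y)
      have h4 := (lt_div_iff₀ hly).1 h1
      linarith
    have hev : ∀ᶠ y in atTop, ∀ j ∈ Finset.range M, ℓ y / 2 ≤ ℓ ((1/2)^j * y) :=
      (eventually_all_finset (Finset.range M)).2 (fun j _ => hblocks j)
    filter_upwards [hev, eventually_gt_atTop 0] with y hy hy0
    set f : ℕ → ℝ := fun j => G ((1/2)^j * y) with hf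
    have htel : ∑ j ∈ Finset.range M, (f j - f (j+1)) = f 0 - f M :=
      Finset.sum_range_sub' f M
    have hterm : ∀ j ∈ Finset.range M, y * Fbar y / 4 ≤ f j - f (j+1) := by
      intro j hj
      have hyj : (0:ℝ) < (1/2)^j * y := by positivity
      have hhalf : (1/2:ℝ)^(j+1) * y = ((1/2)^j * y) / 2 := by
        rw [pow_succ]; ring
      have h1 : ((1/2)^j * y - (1/2)^j * y / 2) * Fbar ((1/2)^j * y)
          ≤ G ((1/2)^j * y) - G ((1/2)^j * y / 2) :=
        hGdge _ _ (by positivity) (by linarith)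
      have h2 : ℓ y / 2 ≤ ℓ ((1/2)^j * y) := hy j hj
      rw [hl _ hyj] at h2
      rw [hl _ hy0] at h2
      have : f j - f (j+1) = G ((1/2)^j * y) - G ((1/2)^j * y / 2) := by
        rw [hf]; simp only []; rw [hhalf]
      rw [this]
      nlinarith [hFpos ((1/2)^j * y), hyj]
    have hsum : (M:ℝ) * (y * Fbar y / 4) ≤ f 0 - f M := by
      rw [← htel]
      calc (M:ℝ) * (y * Fbar y / 4) = ∑ _j ∈ Finset.range M, (y * Fbar y / 4) := by
            rw [Finset.sum_const, Finset.card_range, nsmul_eq_mul]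
      _ ≤ ∑ j ∈ Finset.range M, (f j - f (j+1)) := Finset.sum_le_sum hterm
    have hf0 : f 0 = G y := by rw [hf]; simp
    have hfM : 0 ≤ f M := hG0 _
    have hMpos : (0:ℝ) < M := lt_of_lt_of_le (by positivity) hM
    have hyF : 0 ≤ y * Fbar y := mul_nonneg hy0.le (hF0 y)
    have h4κ : 4 ≤ κ * M := by
      rw [div_le_iff₀ hκ] at hM
      linarith [hM]
    nlinarith [hsum, hf0 ▸ hsum, hG0 y]
  -- x n → ∞
  have hxtop : Tendsto x atTop atTop := by
    rw [tendsto_atTop]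
    intro B
    have hB : 0 < Fbar (max B 1) := hFpos _
    have h2 : Tendsto (fun n : ℕ => 2 / (c * n)) atTop (nhds 0) := by
      apply Tendsto.div_atTop tendsto_const_nhds
      exact Tendsto.const_mul_atTop hc tendsto_natCast_atTop_atTop
    have h2' : ∀ᶠ n : ℕ in atTop, 2 / (c * n) < Fbar (max B 1) :=
      h2.eventually_lt_const hB
    filter_upwards [hlim, h2', eventually_ge_atTop 1] with n h1 h2'' hn1
    by_contra hxB
    push_neg at hxB
    have hxn : x n ≤ max B 1 := le_trans hxB.le (le_max_left _ _)
    have hFmono : Fbar (max B 1) ≤ Fbar (x n) := hFanti hxn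
    have hGX : 0 < G (x n) := hGpos _ (hx n)
    have hn0 : (0:ℝ) < n := by exact_mod_cast hn1
    have hnG : c * ((n:ℝ) * G (x n)) ≤ x n := by
      rw [le_div_iff₀ (by positivity)] at h1
      linarith
    have hGF : (x n / 2) * Fbar (x n) ≤ G (x n) := by
      have := hGdge (x n / 2) (x n) (by linarith [hx n]) (by linarith [hx n])
      have h0 := hG0 (x n / 2)
      nlinarith
    have hFub : Fbar (x n) ≤ 2 / (c * n) := by
      rw [le_div_iff₀ (by positivity)]
      nlinarith [hx n, hFpos (x n)]
    linarith
  -- key uniform bound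
  have hkey : ∀ η κ : ℝ, 0 < η → η ≤ 1 → 0 < κ →
      ∀ᶠ n : ℕ in atTop, (n:ℝ) * Fbar (η * x n) ≤ κ := by
    intro η κ hη hη1 hκ
    have hLev := hL (κ * c * η) (by positivity)
    have hxη : Tendsto (fun n => η * x n) atTop atTop :=
      Tendsto.const_mul_atTop hη hxtop
    have hev : ∀ᶠ n : ℕ in atTop, (η * x n) * Fbar (η * x n) ≤ κ * c * η * G (η * x n) :=
      hxη.eventually hLev
    filter_upwards [hev, hlim, eventually_ge_atTop 1] with n h1 h2 hn1
    have hXpos := hx n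
    have hGX : 0 < G (x n) := hGpos _ hXpos
    have hn0 : (0:ℝ) < n := by exact_mod_cast hn1
    have hnG : c * ((n:ℝ) * G (x n)) ≤ x n := by
      rw [le_div_iff₀ (by positivity)] at h2
      linarith
    have hGm : G (η * x n) ≤ G (x n) := hGmono _ _ (by positivity) (by nlinarith)
    have hF' : 0 ≤ Fbar (η * x n) := hF0 _
    have h1' : x n * Fbar (η * x n) ≤ κ * c * G (x n) := by
      have hstep : (η * x n) * Fbar (η * x n) ≤ κ * c * η * G (x n) := by
        nlinarith [mul_le_mul_of_nonneg_left hGm (by positivity : (0:ℝ) ≤ κ * c * η)]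
      have hA1 : η * (x n * Fbar (η * x n)) ≤ η * (κ * c * G (x n)) := by nlinarith
      exact le_of_mul_le_mul_left hA1 hη
    have hcg : (0:ℝ) < c * G (x n) := by positivity
    have h6 : (n:ℝ) * Fbar (η * x n) * (c * G (x n)) ≤ κ * (c * G (x n)) := by
      nlinarith [mul_le_mul_of_nonneg_left hnG hF']
    exact le_of_mul_le_mul_right h6 hcg
  -- choose parameters
  set η : ℝ := min 1 (c * ε^2 * δ / 16) with hηdef
  have hη0 : 0 < η := lt_min one_pos (by positivity)
  have hη1 : η ≤ 1 := min_le_left _ _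
  have hηle : η ≤ c * ε^2 * δ / 16 := min_le_right _ _
  set β : ℝ := min (A/2) 1 with hβdef
  have hβ0 : 0 < β := lt_min (by positivity) one_pos
  have hβ1 : β ≤ 1 := min_le_right _ _
  set κ₁ : ℝ := min (δ/4) (ε/2) with hκ₁def
  have hκ₁0 : 0 < κ₁ := lt_min (by positivity) (by positivity)
  have haev : ∀ᶠ n : ℕ in atTop, A/2 ≤ a n :=
    ha.eventually (eventually_ge_nhds (by linarith : A/2 < A))
  filter_upwards [hlim, hkey η κ₁ hη0 hη1 hκ₁0, hkey β 1 hβ0 hβ1 one_pos, haev,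
    eventually_ge_atTop 1] with n h1 h2 h3 h4 hn1
  intro k hk1 hk2
  have hn2 : 2 ≤ n := by omega
  have hkn : k ≤ n := by omega
  have hXpos := hx n
  set X := x n with hXdef
  have hb0 : 0 < η * X := by positivity
  have hbX : η * X ≤ X := by nlinarith
  have hGX : 0 < G X := hGpos _ hXpos
  have hn0 : (0:ℝ) < n := by exact_mod_cast (by omega : 1 ≤ n)
  have hnG : c * ((n:ℝ) * G X) ≤ X := by
    rw [le_div_iff₀ (by positivity)] at h1
    linarith
  have hEmin : ∫ ω, min (ξ 0 ω) (η * X) ∂μ = G (η * X) := by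
    rw [aux_Emin μ (ξ 0) (hmeas 0) (hξ0 0) Fbar hFbar hb0, ← hG]
  have hiS' : ∀ ω, iStar n ω < n ∧ ∀ j < n, ξ j ω ≤ ξ (iStar n ω) ω :=
    fun ω => hiStar n ω (by omega)
  have hKk' : ∀ i < n, K n k i ⊆ (Finset.range n).erase i ∧ (K n k i).card = k :=
    fun i hi => hK n k i hi hk1 hk2
  have hGb0 : 0 ≤ G (η * X) := hG0 _
  have hGmono' : G (η * X) ≤ G X := hGmono _ _ hb0.le hbX
  have hFb0 : 0 ≤ Fbar (η * X) := hF0 _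
  have hFbδ : (n:ℝ) * Fbar (η * X) ≤ δ/4 := le_trans h2 (min_le_left _ _)
  have hFbε : (n:ℝ) * Fbar (η * X) ≤ ε/2 := le_trans h2 (min_le_right _ _)
  have hshift : (n:ℝ) * (G X - G (η * X)) ≤ ε * X / 2 := by
    have hd := hGdle (η * X) X hb0.le hbX
    have : (n:ℝ) * (G X - G (η * X)) ≤ (n:ℝ) * ((X - η * X) * Fbar (η * X)) := by
      apply mul_le_mul_of_nonneg_left _ hn0.le
      exact hd
    calc (n:ℝ) * (G X - G (η * X)) ≤ (n:ℝ) * ((X - η * X) * Fbar (η * X)) := this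
    _ ≤ X * ((n:ℝ) * Fbar (η * X)) := by
        nlinarith [mul_nonneg (mul_nonneg (mul_nonneg hn0.le hFb0) hη0.le) hXpos.le]
    _ ≤ X * (ε/2) := by nlinarith [hFbε, hXpos]
    _ = ε * X / 2 := by ring
  have hρ2 : (n:ℝ) * (η * X * G (η * X)) / (ε * X / 2)^2 ≤ δ/4 := by
    rw [div_le_iff₀ (by positivity)]
    have hb1 : (n:ℝ) * (η * X * G (η * X)) ≤ η * X * ((n:ℝ) * G X) := by
      nlinarith [mul_le_mul_of_nonneg_left hGmono' (by positivity : (0:ℝ) ≤ (n:ℝ) * η * X)]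
    have hb2 : η * X * ((n:ℝ) * G X) ≤ η * X * (X / c) := by
      apply mul_le_mul_of_nonneg_left _ (by positivity)
      rw [le_div_iff₀ hc]
      linarith
    have hb3 : η * X * (X / c) ≤ δ/4 * (ε * X / 2)^2 := by
      have h17 : η * (X * X) * 16 ≤ c * ε^2 * δ * (X * X) := by
        nlinarith [mul_le_mul_of_nonneg_right hηle (by positivity : (0:ℝ) ≤ X * X)]
      have he : η * X * (X / c) = (η * (X * X)) / c := by ring
      rw [he, div_le_iff₀ hc]
      nlinarith
    linarith
  have hβa : β * X ≤ a n * X := by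
    have : β ≤ a n := le_trans (min_le_left _ _) h4
    nlinarith
  have hnp : (n:ℝ) * Fbar (a n * X) ≤ 1 := by
    have : Fbar (a n * X) ≤ Fbar (β * X) := hFanti hβa
    nlinarith [hF0 (a n * X)]
  have hppos : 0 < Fbar (a n * X) := hFpos _
  exact aux_prob μ ξ hmeas hindep hident hξ0 Fbar G hFbar hFanti hXpos hb0 hbX hε hδ
    hEmin hn2 hkn (iStar n) hiS' (K n k) hKk' hGb0 hGmono' hshift hFbδ hρ2 hnp hppos
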